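/- arXiv:2105.10149 — 4 statements merged into one kernel-verified Lean document; each statement's English description precedes it below -/
import Mathlib

section
/- Let n ≥ 2 and let p be a real number with 1 ≤ p < n, and set p* = np/(n−p). Then there exists a constant C > 0, depending only on p and n, such that for every continuously differentiable function u : ℝⁿ → ℝ with compact support, the L^{p*} norm of u on ℝⁿ (with Lebesgue measure) is at most C times the L^p norm of the gradient of u, i.e. (∫_{ℝⁿ} |u|^{p*} dx)^{1/p*} ≤ C (∫_{ℝⁿ} |Du|^p dx)^{1/p}, where |Du| denotes the Euclidean norm of the gradient (total derivative) of u. -/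
open MeasureTheory NNReal ENNReal Module

theorem integral_rpow_eq_eLpNorm {n : ℕ} {F : Type*}
    [NormedAddCommGroup F] (f : EuclideanSpace ℝ (Fin n) → F)
    (hf : Continuous f) (q : ℝ) (hq : 0 < q) :
    (∫ x, ‖f x‖ ^ q ) ^ (1/q) = (eLpNorm f (ENNReal.ofReal q) volume).toReal := by
  rw [eLpNorm_eq_lintegral_rpow_enorm_toReal (by simp [ENNReal.ofReal_eq_zero, not_le, hq]) (by simp),
    ENNReal.toReal_ofReal hq.le,
    integral_eq_lintegral_of_nonneg_ae (Filter.Eventually.of_forall fun x => by positivity)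
      ((hf.norm.rpow_const fun x => Or.inr hq.le).aestronglyMeasurable),
    show (∫⁻ x, ENNReal.ofReal (‖f x‖ ^ q) ) = ∫⁻ x, ‖f x‖ₑ ^ q  from
      lintegral_congr fun x => by
        rw [← ofReal_norm, ← ENNReal.ofReal_rpow_of_nonneg (norm_nonneg _) hq.le],
    ENNReal.toReal_rpow]

/-- **Gagliardo–Nirenberg–Sobolev inequality.** For `1 ≤ p < n` there is a constant
`C > 0`, depending only on `p` and `n`, such that for every `C¹` compactly supported
`u : ℝⁿ → ℝ` one has `‖u‖_{L^{p*}} ≤ C ‖Du‖_{L^p}` with `p* = np/(n−p)`. -/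
theorem gagliardo_nirenberg_sobolev (n : ℕ) (hn : 2 ≤ n) (p : ℝ)
    (hp1 : 1 ≤ p) (hpn : p < n) :
    ∃ C : ℝ, 0 < C ∧
      ∀ u : EuclideanSpace ℝ (Fin n) → ℝ, ContDiff ℝ 1 u → HasCompactSupport u →
        (∫ x, |u x| ^ (n * p / (n - p))) ^ ((n - p) / (n * p)) ≤
          C * (∫ x, ‖fderiv ℝ u x‖ ^ p) ^ (1 / p) := by
  have hp0 : (0:ℝ) < p := lt_of_lt_of_le one_pos hp1
  have hnp : (0:ℝ) < n - p := sub_pos.mpr hpn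
  have hn0 : (0:ℝ) < n := lt_trans hp0 hpn
  set q : ℝ := n * p / (n - p) with hq_def
  have hq0 : 0 < q := by positivity
  set P : ℝ≥0 := ⟨p, hp0.le⟩ with hP_def
  set P' : ℝ≥0 := ⟨q, hq0.le⟩ with hP'_def
  have hfr : finrank ℝ (EuclideanSpace ℝ (Fin n)) = n := finrank_euclideanSpace_fin
  refine ⟨(SNormLESNormFDerivOfEqConst (E := EuclideanSpace ℝ (Fin n)) ℝ volume P : ℝ) + 1,
    by positivity, fun u hu h2u => ?_⟩
  have key := eLpNorm_le_eLpNorm_fderiv_of_eq (μ := volume) hu h2u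
    (p := P) (p' := P') (by exact_mod_cast hp1) (by rw [hfr]; omega)
    (by
      rw [hfr]
      show q⁻¹ = p⁻¹ - (n : ℝ)⁻¹
      rw [hq_def]
      rw [inv_div]
      field_simp)
  set C' := SNormLESNormFDerivOfEqConst (E := EuclideanSpace ℝ (Fin n)) ℝ volume P
  have hfd_cont : Continuous (fderiv ℝ u) := (hu.fderiv_right (m := 0) le_rfl).continuous
  have hfd_supp : HasCompactSupport (fderiv ℝ u) := h2u.fderiv (𝕜 := ℝ)
  have hfin : eLpNorm (fderiv ℝ u) P volume ≠ ⊤ :=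
    (hfd_cont.memLp_of_hasCompactSupport (μ := volume) hfd_supp).eLpNorm_lt_top.ne
  have h1 : (∫ x, |u x| ^ q) ^ ((n - p) / (n*p)) = (eLpNorm u (ENNReal.ofReal q) volume).toReal := by
    have : (n - p) / (n * p) = 1 / q := by
      rw [hq_def, one_div, inv_div]
    rw [this]
    simp_rw [← Real.norm_eq_abs]
    exact integral_rpow_eq_eLpNorm u hu.continuous q hq0
  have h2 : (∫ x, ‖fderiv ℝ u x‖ ^ p) ^ (1/p) =
      (eLpNorm (fderiv ℝ u) (ENNReal.ofReal p) volume).toReal :=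
    integral_rpow_eq_eLpNorm _ hfd_cont p hp0
  have hoq : ENNReal.ofReal q = (P' : ℝ≥0∞) := by
    have : (P' : ℝ) = q := rfl
    rw [← this, ENNReal.ofReal_coe_nnreal]
  have hop : ENNReal.ofReal p = (P : ℝ≥0∞) := by
    have : (P : ℝ) = p := rfl
    rw [← this, ENNReal.ofReal_coe_nnreal]
  rw [h1, h2, hoq, hop]
  calc (eLpNorm u (P' : ℝ≥0∞) volume).toReal
      ≤ ((C' : ℝ≥0∞) * eLpNorm (fderiv ℝ u) P volume).toReal := by
        apply ENNReal.toReal_mono _ key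
        exact ENNReal.mul_ne_top ENNReal.coe_ne_top hfin
    _ = (C' : ℝ) * (eLpNorm (fderiv ℝ u) P volume).toReal := by
        rw [ENNReal.toReal_mul, ENNReal.coe_toReal]
    _ ≤ ((C' : ℝ) + 1) * (eLpNorm (fderiv ℝ u) P volume).toReal := by
        apply mul_le_mul_of_nonneg_right (by linarith) ENNReal.toReal_nonneg
end

section
/- Let n ≥ 2. There exists a constant C > 0, depending only on n, such that for every continuously differentiable function u : ℝⁿ → ℝ with compact support and every open ball B ⊂ ℝⁿ of positive radius, the mean oscillation of u over B is controlled by the L^n norm of the gradient of u on all of ℝⁿ: (1/|B|) ∫_B |u(x) − u_B| dx ≤ C (∫_{ℝⁿ} |Du|^n dy)^{1/n}, where u_B = (1/|B|) ∫_B u(x) dx denotes the average of u over B and |B| is the Lebesgue measure of B. -/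
open MeasureTheory

open Metric Set
open scoped ENNReal NNReal

/-- The average `u_B = (1/|B|) ∫_B u` of `u` over the open ball `B = B(c,r)`. -/
noncomputable def ballAvg {n : ℕ} (u : EuclideanSpace ℝ (Fin n) → ℝ)
    (c : EuclideanSpace ℝ (Fin n)) (r : ℝ) : ℝ :=
  ((volume (Metric.ball c r)).toReal)⁻¹ * ∫ y in Metric.ball c r, u y

/-- The mean oscillation `(1/|B|) ∫_B |u − u_B|` of `u` over the ball `B = B(c,r)`. -/
noncomputable def meanOsc {n : ℕ} (u : EuclideanSpace ℝ (Fin n) → ℝ)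
    (c : EuclideanSpace ℝ (Fin n)) (r : ℝ) : ℝ :=
  ((volume (Metric.ball c r)).toReal)⁻¹ *
    ∫ x in Metric.ball c r, |u x - ballAvg u c r|

/-- contraction lemma -/
lemma contraction_lintegral (G : EuclideanSpace ℝ (Fin n) → ℝ≥0∞) (hG : Measurable G)
    (a : EuclideanSpace ℝ (Fin n)) {t : ℝ} (ht : 0 < t) (B : Set (EuclideanSpace ℝ (Fin n)))
    (hmaps : ∀ x ∈ B, a + t • x ∈ B) :
    ∫⁻ x in B, G (a + t • x) ≤ (ENNReal.ofReal (t ^ n))⁻¹ * ∫⁻ z in B, G z := by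
  have hφ : Measurable fun x : EuclideanSpace ℝ (Fin n) => a + t • x := by fun_prop
  rw [← lintegral_map hG hφ]
  rw [← smul_eq_mul ((ENNReal.ofReal (t ^ n))⁻¹), ← lintegral_smul_measure]
  apply lintegral_mono'
  · refine Measure.le_iff.2 fun s hs => ?_
    rw [Measure.map_apply hφ hs, Measure.smul_apply, Measure.restrict_apply (hφ hs),
      Measure.restrict_apply hs]
    have hsub : (fun x => a + t • x) ⁻¹' s ∩ B ⊆ (fun x => a + t • x) ⁻¹' (s ∩ B) := by
      intro x hx
      exact ⟨hx.1, hmaps x hx.2⟩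
    calc volume ((fun x => a + t • x) ⁻¹' s ∩ B)
        ≤ volume ((fun x => a + t • x) ⁻¹' (s ∩ B)) := measure_mono hsub
      _ = (ENNReal.ofReal (t ^ n))⁻¹ * volume (s ∩ B) := by
          have : (fun x : EuclideanSpace ℝ (Fin n) => a + t • x) ⁻¹' (s ∩ B)
              = (t • ·) ⁻¹' ((a + ·) ⁻¹' (s ∩ B)) := rfl
          rw [this, Measure.addHaar_preimage_smul volume ht.ne', measure_preimage_add,
            finrank_euclideanSpace_fin, abs_inv, abs_of_nonneg (pow_nonneg ht.le n),
            ENNReal.ofReal_inv_of_pos (pow_pos ht n)]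
  · exact le_rfl

lemma segment_est (u : EuclideanSpace ℝ (Fin n) → ℝ) (hu : ContDiff ℝ 1 u)
    (x y : EuclideanSpace ℝ (Fin n)) :
    |u x - u y| ≤ ‖x - y‖ * ∫ t in (0:ℝ)..1, ‖fderiv ℝ u (y + t • (x - y))‖ := by
  have hgc : Continuous fun z => fderiv ℝ u z := hu.continuous_fderiv one_ne_zero
  have hψ : Continuous fun t : ℝ => y + t • (x - y) := by fun_prop
  have hd : ∀ t ∈ Set.uIcc (0:ℝ) 1,
      HasDerivAt (fun s => u (y + s • (x - y)))
        ((fderiv ℝ u (y + t • (x - y))) (x - y)) t := by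
    intro t _
    have h1 : HasDerivAt (fun s : ℝ => y + s • (x - y)) (x - y) t := by
      simpa using ((hasDerivAt_id t).smul_const (x - y)).const_add y
    exact ((hu.differentiable one_ne_zero) _).hasFDerivAt.comp_hasDerivAt t h1
  have hcont : Continuous fun t : ℝ => (fderiv ℝ u (y + t • (x - y))) (x - y) := by
    exact (ContinuousLinearMap.apply ℝ ℝ (x - y)).continuous.comp (hgc.comp hψ)
  have heq : u x - u y = ∫ t in (0:ℝ)..1, (fderiv ℝ u (y + t • (x - y))) (x - y) := by
    have := intervalIntegral.integral_eq_sub_of_hasDerivAt hd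
      (hcont.intervalIntegrable 0 1)
    rw [this]
    norm_num
  rw [heq]
  calc |∫ t in (0:ℝ)..1, (fderiv ℝ u (y + t • (x - y))) (x - y)|
      ≤ ∫ t in (0:ℝ)..1, ‖(fderiv ℝ u (y + t • (x - y))) (x - y)‖ :=
        by simpa [Real.norm_eq_abs] using intervalIntegral.norm_integral_le_integral_norm (f := fun t : ℝ => (fderiv ℝ u (y + t • (x - y))) (x - y)) zero_le_one
    _ ≤ ∫ t in (0:ℝ)..1, ‖fderiv ℝ u (y + t • (x - y))‖ * ‖x - y‖ := by
        apply intervalIntegral.integral_mono_on zero_le_one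
        · exact (hcont.norm.intervalIntegrable 0 1)
        · exact (((hgc.comp hψ).norm.mul continuous_const).intervalIntegrable 0 1)
        · intro t _
          exact ContinuousLinearMap.le_opNorm _ _
    _ = ‖x - y‖ * ∫ t in (0:ℝ)..1, ‖fderiv ℝ u (y + t • (x - y))‖ := by
        rw [← intervalIntegral.integral_const_mul]
        simp [mul_comm]

set_option maxHeartbeats 1600000 in
/-- **John–Nirenberg (1961): `W^{1,n}(ℝⁿ) ⊆ BMO`.** There is a constant `C > 0`,
depending only on `n`, such that for every `C¹` compactly supported `u : ℝⁿ → ℝ` and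
every open ball `B` of positive radius, the mean oscillation of `u` over `B` is at most
`C (∫_{ℝⁿ} |Du|^n)^{1/n}`. -/
theorem john_nirenberg_W1n_subset_BMO (n : ℕ) (hn : 2 ≤ n) :
    ∃ C : ℝ, 0 < C ∧
      ∀ u : EuclideanSpace ℝ (Fin n) → ℝ, ContDiff ℝ 1 u → HasCompactSupport u →
        ∀ (c : EuclideanSpace ℝ (Fin n)) (r : ℝ), 0 < r →
          meanOsc u c r ≤ C * (∫ y, ‖fderiv ℝ u y‖ ^ (n : ℝ)) ^ (1 / (n : ℝ)) := by
  have hn' : (1:ℝ) < n := by exact_mod_cast hn.trans_lt' one_lt_two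
  have hnR : (0:ℝ) < n := lt_trans one_pos hn'
  have hn0 : n ≠ 0 := by omega
  set ωR := (volume (ball (0 : EuclideanSpace ℝ (Fin n)) 1)).toReal with hωRdef
  have hω0 : 0 < ωR :=
    ENNReal.toReal_pos (measure_ball_pos volume _ one_pos).ne' measure_ball_lt_top.ne
  refine ⟨2^(n+2) * ωR ^ (-(1/(n:ℝ))), by positivity, ?_⟩
  intro u hu h2u c r hr
  have hBmeas : MeasurableSet (ball c r) := measurableSet_ball
  have hμB0 : volume (ball c r) ≠ 0 := (measure_ball_pos volume c hr).ne'
  have hμBT : volume (ball c r) ≠ ⊤ := measure_ball_lt_top.ne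
  have hVR0 : 0 < (volume (ball c r)).toReal := ENNReal.toReal_pos hμB0 hμBT
  have hgc : Continuous fun z => ‖fderiv ℝ u z‖ := (hu.continuous_fderiv one_ne_zero).norm
  set G : EuclideanSpace ℝ (Fin n) → ℝ≥0∞ := fun z => ENNReal.ofReal ‖fderiv ℝ u z‖
    with hGdef
  have hG : Measurable G := ENNReal.measurable_ofReal.comp hgc.measurable
  have huc : Continuous u := hu.continuous
  have hIntB : ∀ f : EuclideanSpace ℝ (Fin n) → ℝ, Continuous f →
      IntegrableOn f (ball c r) volume := fun f hf =>
    (hf.continuousOn.integrableOn_compact (isCompact_closedBall c r)).mono_set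
      ball_subset_closedBall
  -- Step A : pointwise bound by the double integral
  have stepA : ∀ x, ENNReal.ofReal |u x - ballAvg u c r|
      ≤ (volume (ball c r))⁻¹ * ∫⁻ y in ball c r, ENNReal.ofReal |u x - u y| := by
    intro x
    have h1 : u x - ballAvg u c r
        = (volume (ball c r)).toReal⁻¹ * ∫ y in ball c r, (u x - u y) := by
      rw [integral_sub (integrableOn_const (C := u x) measure_ball_lt_top.ne) (hIntB u huc),
        setIntegral_const, smul_eq_mul, ballAvg, measureReal_def]
      field_simp
    have h2 : |u x - ballAvg u c r|
        ≤ (volume (ball c r)).toReal⁻¹ * ∫ y in ball c r, |u x - u y| := by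
      rw [h1, abs_mul, abs_of_nonneg (inv_nonneg.2 ENNReal.toReal_nonneg)]
      refine mul_le_mul_of_nonneg_left ?_ (inv_nonneg.2 ENNReal.toReal_nonneg)
      simpa [Real.norm_eq_abs] using
        norm_integral_le_integral_norm (μ := volume.restrict (ball c r))
          (f := fun y => u x - u y)
    calc ENNReal.ofReal |u x - ballAvg u c r|
        ≤ ENNReal.ofReal ((volume (ball c r)).toReal⁻¹ * ∫ y in ball c r, |u x - u y|) :=
          ENNReal.ofReal_le_ofReal h2
      _ = ENNReal.ofReal ((volume (ball c r)).toReal⁻¹) *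
            ENNReal.ofReal (∫ y in ball c r, |u x - u y|) :=
          ENNReal.ofReal_mul (inv_nonneg.2 ENNReal.toReal_nonneg)
      _ = (volume (ball c r))⁻¹ * ∫⁻ y in ball c r, ENNReal.ofReal |u x - u y| := by
          rw [ENNReal.ofReal_inv_of_pos hVR0, ENNReal.ofReal_toReal hμBT,
            ofReal_integral_eq_lintegral_ofReal
              (hIntB (fun y => |u x - u y|) ((continuous_const.sub huc).abs))
              (Filter.Eventually.of_forall fun y => abs_nonneg _)]
  -- Step B : pointwise FTC bound
  have stepB : ∀ x ∈ ball c r, ∀ y ∈ ball c r,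
      ENNReal.ofReal |u x - u y| ≤ ENNReal.ofReal (2*r) *
        ∫⁻ t in Ioc (0:ℝ) 1, G (y + t • (x - y)) := by
    intro x hx y hy
    have hψ : Continuous fun t : ℝ => y + t • (x - y) := by fun_prop
    have hInt01 : IntegrableOn (fun t : ℝ => ‖fderiv ℝ u (y + t • (x - y))‖)
        (Ioc (0:ℝ) 1) volume :=
      (((hgc.comp hψ).continuousOn.integrableOn_compact isCompact_Icc).mono_set
        Ioc_subset_Icc_self)
    have hIpos : 0 ≤ ∫ t in (0:ℝ)..1, ‖fderiv ℝ u (y + t • (x - y))‖ :=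
      intervalIntegral.integral_nonneg zero_le_one fun t _ => norm_nonneg _
    have hxy : ‖x - y‖ ≤ 2 * r := by
      have h1 : dist x c < r := mem_ball.1 hx
      have h2 : dist y c < r := mem_ball.1 hy
      calc ‖x - y‖ = dist x y := (dist_eq_norm x y).symm
        _ ≤ dist x c + dist c y := dist_triangle x c y
        _ ≤ 2 * r := by rw [dist_comm c y]; linarith
    have h3 : |u x - u y| ≤ (2*r) * ∫ t in (0:ℝ)..1, ‖fderiv ℝ u (y + t • (x - y))‖ :=
      (segment_est u hu x y).trans (mul_le_mul_of_nonneg_right hxy hIpos)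
    calc ENNReal.ofReal |u x - u y|
        ≤ ENNReal.ofReal ((2*r) * ∫ t in (0:ℝ)..1, ‖fderiv ℝ u (y + t • (x - y))‖) :=
          ENNReal.ofReal_le_ofReal h3
      _ = ENNReal.ofReal (2*r) *
            ENNReal.ofReal (∫ t in (0:ℝ)..1, ‖fderiv ℝ u (y + t • (x - y))‖) :=
          ENNReal.ofReal_mul (by positivity)
      _ = ENNReal.ofReal (2*r) * ∫⁻ t in Ioc (0:ℝ) 1, G (y + t • (x - y)) := by
          rw [intervalIntegral.integral_of_le zero_le_one,
            ofReal_integral_eq_lintegral_ofReal hInt01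
              (Filter.Eventually.of_forall fun t => norm_nonneg _)]
  -- contraction estimate
  have hcontract : ∀ (t : ℝ) (a : EuclideanSpace ℝ (Fin n)), 2⁻¹ ≤ t →
      (∀ x ∈ ball c r, a + t • x ∈ ball c r) →
      ∫⁻ x in ball c r, G (a + t • x) ≤ 2^n * ∫⁻ z in ball c r, G z := by
    intro t a ht hmaps
    have ht0 : (0:ℝ) < t := lt_of_lt_of_le (by norm_num) ht
    refine (contraction_lintegral G hG a ht0 _ hmaps).trans ?_
    refine mul_le_mul_left ?_ _
    have h1 : ((2:ℝ)⁻¹)^n ≤ t^n := pow_le_pow_left₀ (by norm_num) ht n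
    calc (ENNReal.ofReal (t ^ n))⁻¹
        ≤ (ENNReal.ofReal (((2:ℝ)⁻¹) ^ n))⁻¹ :=
          ENNReal.inv_le_inv.2 (ENNReal.ofReal_le_ofReal h1)
      _ = 2^n := by
          rw [ENNReal.ofReal_pow (by norm_num), ENNReal.ofReal_inv_of_pos two_pos,
            ENNReal.ofReal_ofNat, ← ENNReal.inv_pow, inv_inv]
  -- Step C : the triple integral bound
  have stepC : (∫⁻ x in ball c r, ∫⁻ y in ball c r, ∫⁻ t in Ioc (0:ℝ) 1, G (y + t • (x - y)))
      ≤ 2^(n+1) * volume (ball c r) * ∫⁻ z in ball c r, G z := by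
    have measTriple : ∀ s : Set ℝ, Measurable
        (fun p : (EuclideanSpace ℝ (Fin n)) × (EuclideanSpace ℝ (Fin n)) =>
          ∫⁻ t in s, G (p.2 + t • (p.1 - p.2))) := by
      intro s
      apply Measurable.lintegral_prod_right'
        (f := fun q : ((EuclideanSpace ℝ (Fin n)) × (EuclideanSpace ℝ (Fin n))) × ℝ =>
          G (q.1.2 + q.2 • (q.1.1 - q.1.2)))
      exact hG.comp (by fun_prop)
    have part1 : ∀ x ∈ ball c r,
        (∫⁻ y in ball c r, ∫⁻ t in Ioc (0:ℝ) 2⁻¹, G (y + t • (x - y)))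
          ≤ 2^n * ∫⁻ z in ball c r, G z := by
      intro x hx
      rw [lintegral_lintegral_swap (f := fun (y : EuclideanSpace ℝ (Fin n)) (t : ℝ) =>
        G (y + t • (x - y))) (by exact (hG.comp (by fun_prop :
          Measurable fun p : (EuclideanSpace ℝ (Fin n)) × ℝ =>
            p.1 + p.2 • (x - p.1))).aemeasurable)]
      calc (∫⁻ t in Ioc (0:ℝ) 2⁻¹, ∫⁻ y in ball c r, G (y + t • (x - y)))
          ≤ ∫⁻ _t in Ioc (0:ℝ) 2⁻¹, 2^n * ∫⁻ z in ball c r, G z := by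
            refine setLIntegral_mono' measurableSet_Ioc fun t ht => ?_
            have heq : ∀ y : EuclideanSpace ℝ (Fin n),
                y + t • (x - y) = t • x + (1-t) • y := fun y => by
              rw [smul_sub, sub_smul, one_smul]; abel
            simp_rw [heq]
            refine hcontract (1-t) (t • x) (by linarith [ht.2]) fun z hz => ?_
            exact (convex_ball c r) hx hz ht.1.le (by linarith [ht.2]) (by ring)
        _ ≤ 2^n * ∫⁻ z in ball c r, G z := by
            rw [setLIntegral_const, Real.volume_Ioc]
            calc (2^n * ∫⁻ z in ball c r, G z) * ENNReal.ofReal (2⁻¹ - 0)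
                ≤ (2^n * ∫⁻ z in ball c r, G z) * 1 := by
                  refine mul_le_mul_right ?_ _
                  rw [← ENNReal.ofReal_one]
                  exact ENNReal.ofReal_le_ofReal (by norm_num)
              _ = 2^n * ∫⁻ z in ball c r, G z := mul_one _
    have part2 : ∀ y ∈ ball c r,
        (∫⁻ x in ball c r, ∫⁻ t in Ioc (2⁻¹:ℝ) 1, G (y + t • (x - y)))
          ≤ 2^n * ∫⁻ z in ball c r, G z := by
      intro y hy
      rw [lintegral_lintegral_swap (f := fun (xx : EuclideanSpace ℝ (Fin n)) (t : ℝ) =>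
        G (y + t • (xx - y))) (by exact (hG.comp (by fun_prop :
          Measurable fun p : (EuclideanSpace ℝ (Fin n)) × ℝ =>
            y + p.2 • (p.1 - y))).aemeasurable)]
      calc (∫⁻ t in Ioc (2⁻¹:ℝ) 1, ∫⁻ x in ball c r, G (y + t • (x - y)))
          ≤ ∫⁻ _t in Ioc (2⁻¹:ℝ) 1, 2^n * ∫⁻ z in ball c r, G z := by
            refine setLIntegral_mono' measurableSet_Ioc fun t ht => ?_
            have heq : ∀ x : EuclideanSpace ℝ (Fin n),
                y + t • (x - y) = (1-t) • y + t • x := fun x => by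
              rw [smul_sub, sub_smul, one_smul]; abel
            simp_rw [heq]
            refine hcontract t ((1-t) • y) ht.1.le fun z hz => ?_
            exact (convex_ball c r) hy hz (by linarith [ht.2]) (by linarith [ht.1.le]) (by ring)
        _ ≤ 2^n * ∫⁻ z in ball c r, G z := by
            rw [setLIntegral_const, Real.volume_Ioc]
            calc (2^n * ∫⁻ z in ball c r, G z) * ENNReal.ofReal (1 - 2⁻¹)
                ≤ (2^n * ∫⁻ z in ball c r, G z) * 1 := by
                  refine mul_le_mul_right ?_ _
                  rw [← ENNReal.ofReal_one]
                  exact ENNReal.ofReal_le_ofReal (by norm_num)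
              _ = 2^n * ∫⁻ z in ball c r, G z := mul_one _
    have split_pt : ∀ x y : EuclideanSpace ℝ (Fin n),
        (∫⁻ t in Ioc (0:ℝ) 1, G (y + t • (x - y)))
          ≤ (∫⁻ t in Ioc (0:ℝ) 2⁻¹, G (y + t • (x - y)))
            + ∫⁻ t in Ioc (2⁻¹:ℝ) 1, G (y + t • (x - y)) := by
      intro x y
      rw [← Set.Ioc_union_Ioc_eq_Ioc (by norm_num : (0:ℝ) ≤ 2⁻¹) (by norm_num : (2⁻¹:ℝ) ≤ 1)]
      exact lintegral_union_le _ _ _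
    calc (∫⁻ x in ball c r, ∫⁻ y in ball c r, ∫⁻ t in Ioc (0:ℝ) 1, G (y + t • (x - y)))
        ≤ ∫⁻ x in ball c r, ∫⁻ y in ball c r,
            ((∫⁻ t in Ioc (0:ℝ) 2⁻¹, G (y + t • (x - y)))
              + ∫⁻ t in Ioc (2⁻¹:ℝ) 1, G (y + t • (x - y))) :=
          lintegral_mono fun x => lintegral_mono fun y => split_pt x y
      _ = ∫⁻ x in ball c r,
            ((∫⁻ y in ball c r, ∫⁻ t in Ioc (0:ℝ) 2⁻¹, G (y + t • (x - y)))
              + ∫⁻ y in ball c r, ∫⁻ t in Ioc (2⁻¹:ℝ) 1, G (y + t • (x - y))) := by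
          refine lintegral_congr fun x => ?_
          exact lintegral_add_left ((measTriple (Ioc (0:ℝ) 2⁻¹)).comp measurable_prodMk_left) _
      _ = (∫⁻ x in ball c r, ∫⁻ y in ball c r, ∫⁻ t in Ioc (0:ℝ) 2⁻¹, G (y + t • (x - y)))
            + ∫⁻ x in ball c r, ∫⁻ y in ball c r, ∫⁻ t in Ioc (2⁻¹:ℝ) 1, G (y + t • (x - y)) :=
          lintegral_add_left (Measurable.lintegral_prod_right' (measTriple (Ioc (0:ℝ) 2⁻¹))) _
      _ ≤ (2^n * ∫⁻ z in ball c r, G z) * volume (ball c r)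
            + (2^n * ∫⁻ z in ball c r, G z) * volume (ball c r) := by
          refine add_le_add ?_ ?_
          · calc (∫⁻ x in ball c r, ∫⁻ y in ball c r, ∫⁻ t in Ioc (0:ℝ) 2⁻¹, G (y + t • (x - y)))
                ≤ ∫⁻ _x in ball c r, 2^n * ∫⁻ z in ball c r, G z :=
                  setLIntegral_mono' hBmeas part1
              _ = (2^n * ∫⁻ z in ball c r, G z) * volume (ball c r) := setLIntegral_const _ _
          · calc (∫⁻ x in ball c r, ∫⁻ y in ball c r, ∫⁻ t in Ioc (2⁻¹:ℝ) 1, G (y + t • (x - y)))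
                = ∫⁻ y in ball c r, ∫⁻ x in ball c r, ∫⁻ t in Ioc (2⁻¹:ℝ) 1, G (y + t • (x - y)) :=
                  lintegral_lintegral_swap (f := fun (x y : EuclideanSpace ℝ (Fin n)) =>
                    ∫⁻ t in Ioc (2⁻¹:ℝ) 1, G (y + t • (x - y)))
                    (by exact (measTriple (Ioc (2⁻¹:ℝ) 1)).aemeasurable)
              _ ≤ ∫⁻ _y in ball c r, 2^n * ∫⁻ z in ball c r, G z :=
                  setLIntegral_mono' hBmeas part2
              _ = (2^n * ∫⁻ z in ball c r, G z) * volume (ball c r) := setLIntegral_const _ _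
      _ = 2^(n+1) * volume (ball c r) * ∫⁻ z in ball c r, G z := by
          rw [pow_succ]; ring
  -- Step D : Hölder
  have stepD : (∫⁻ z in ball c r, G z)
      ≤ (∫⁻ z, G z ^ (n:ℝ)) ^ (1/(n:ℝ)) * (volume (ball c r)) ^ (1 - 1/(n:ℝ)) := by
    have hpq : (n:ℝ).HolderConjugate (Real.conjExponent n) :=
      Real.HolderConjugate.conjExponent hn'
    have hq : 1 / Real.conjExponent (n:ℝ) = 1 - 1/(n:ℝ) := by
      have := hpq.inv_add_inv_eq_one
      rw [one_div, one_div]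
      linarith
    calc (∫⁻ z in ball c r, G z)
        = ∫⁻ z in ball c r, ((G * fun _ => 1 : EuclideanSpace ℝ (Fin n) → ℝ≥0∞)) z := by simp
      _ ≤ (∫⁻ z in ball c r, G z ^ (n:ℝ)) ^ (1/(n:ℝ)) *
            (∫⁻ z in ball c r, (1:ℝ≥0∞) ^ Real.conjExponent (n:ℝ)) ^ (1/Real.conjExponent (n:ℝ)) :=
          ENNReal.lintegral_mul_le_Lp_mul_Lq _ hpq hG.aemeasurable aemeasurable_const
      _ ≤ (∫⁻ z, G z ^ (n:ℝ)) ^ (1/(n:ℝ)) * (volume (ball c r)) ^ (1 - 1/(n:ℝ)) := by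
          rw [hq]
          refine mul_le_mul' ?_ ?_
          · exact ENNReal.rpow_le_rpow (setLIntegral_le_lintegral _ _) (by positivity)
          · refine le_of_eq ?_
            congr 1
            simp [Measure.restrict_apply_univ]
  -- assemble the ENNReal chain
  have main_chain : (∫⁻ x in ball c r, ENNReal.ofReal |u x - ballAvg u c r|)
      ≤ ENNReal.ofReal (2*r) * 2^(n+1) * (∫⁻ z, G z ^ (n:ℝ)) ^ (1/(n:ℝ)) *
        (volume (ball c r)) ^ (1 - 1/(n:ℝ)) := by
    have hinv_ne_top : (volume (ball c r))⁻¹ ≠ ⊤ := ENNReal.inv_ne_top.2 hμB0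
    have hcancel : (volume (ball c r))⁻¹ * volume (ball c r) = 1 :=
      ENNReal.inv_mul_cancel hμB0 hμBT
    calc (∫⁻ x in ball c r, ENNReal.ofReal |u x - ballAvg u c r|)
        ≤ ∫⁻ x in ball c r,
            (volume (ball c r))⁻¹ * ∫⁻ y in ball c r, ENNReal.ofReal |u x - u y| :=
          lintegral_mono stepA
      _ = (volume (ball c r))⁻¹ *
            ∫⁻ x in ball c r, ∫⁻ y in ball c r, ENNReal.ofReal |u x - u y| :=
          lintegral_const_mul' _ _ hinv_ne_top
      _ ≤ (volume (ball c r))⁻¹ * ∫⁻ x in ball c r,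
            (ENNReal.ofReal (2*r) * ∫⁻ y in ball c r, ∫⁻ t in Ioc (0:ℝ) 1, G (y + t • (x - y))) := by
          refine mul_le_mul_right ?_ _
          refine setLIntegral_mono' hBmeas fun x hx => ?_
          calc (∫⁻ y in ball c r, ENNReal.ofReal |u x - u y|)
              ≤ ∫⁻ y in ball c r,
                  ENNReal.ofReal (2*r) * ∫⁻ t in Ioc (0:ℝ) 1, G (y + t • (x - y)) :=
                setLIntegral_mono' hBmeas fun y hy => stepB x hx y hy
            _ = ENNReal.ofReal (2*r) *
                  ∫⁻ y in ball c r, ∫⁻ t in Ioc (0:ℝ) 1, G (y + t • (x - y)) :=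
                lintegral_const_mul' _ _ ENNReal.ofReal_ne_top
      _ = (volume (ball c r))⁻¹ * ENNReal.ofReal (2*r) *
            ∫⁻ x in ball c r, ∫⁻ y in ball c r, ∫⁻ t in Ioc (0:ℝ) 1, G (y + t • (x - y)) := by
          rw [lintegral_const_mul' _ _ ENNReal.ofReal_ne_top, mul_assoc]
      _ ≤ (volume (ball c r))⁻¹ * ENNReal.ofReal (2*r) *
            (2^(n+1) * volume (ball c r) * ∫⁻ z in ball c r, G z) :=
          mul_le_mul_right stepC _
      _ ≤ (volume (ball c r))⁻¹ * ENNReal.ofReal (2*r) *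
            (2^(n+1) * volume (ball c r) *
              ((∫⁻ z, G z ^ (n:ℝ)) ^ (1/(n:ℝ)) * (volume (ball c r)) ^ (1 - 1/(n:ℝ)))) := by
          refine mul_le_mul_right (mul_le_mul_right stepD _) _
      _ = ((volume (ball c r))⁻¹ * volume (ball c r)) *
            (ENNReal.ofReal (2*r) * 2^(n+1) * (∫⁻ z, G z ^ (n:ℝ)) ^ (1/(n:ℝ)) *
              (volume (ball c r)) ^ (1 - 1/(n:ℝ))) := by ring
      _ = ENNReal.ofReal (2*r) * 2^(n+1) * (∫⁻ z, G z ^ (n:ℝ)) ^ (1/(n:ℝ)) *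
            (volume (ball c r)) ^ (1 - 1/(n:ℝ)) := by rw [hcancel, one_mul]
  -- convert to the real statement
  have hpow_eq : (fun z : EuclideanSpace ℝ (Fin n) => ‖fderiv ℝ u z‖ ^ (n:ℝ))
      = fun z => ‖fderiv ℝ u z‖ ^ n := by
    funext z; rw [Real.rpow_natCast]
  have hsupp_pow : HasCompactSupport fun z : EuclideanSpace ℝ (Fin n) => ‖fderiv ℝ u z‖ ^ n := by
    exact (h2u.fderiv (𝕜 := ℝ)).comp_left (g := fun v : (EuclideanSpace ℝ (Fin n)) →L[ℝ] ℝ => ‖v‖ ^ n)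
      (by simp [zero_pow hn0])
  have hINint : Integrable (fun z : EuclideanSpace ℝ (Fin n) => ‖fderiv ℝ u z‖ ^ (n:ℝ)) := by
    rw [hpow_eq]
    exact (hgc.pow n).integrable_of_hasCompactSupport hsupp_pow
  have hIN0 : 0 ≤ ∫ z, ‖fderiv ℝ u z‖ ^ (n:ℝ) := integral_nonneg fun z => by positivity
  have hGn_eq : (∫⁻ z, G z ^ (n:ℝ)) = ENNReal.ofReal (∫ z, ‖fderiv ℝ u z‖ ^ (n:ℝ)) := by
    rw [ofReal_integral_eq_lintegral_ofReal hINint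
      (Filter.Eventually.of_forall fun z => by positivity)]
    refine lintegral_congr fun z => ?_
    exact ENNReal.ofReal_rpow_of_nonneg (norm_nonneg _) hnR.le
  have he0 : 0 ≤ 1 - 1/(n:ℝ) := by
    have : 1/(n:ℝ) ≤ 1 := by rw [div_le_one hnR]; exact hn'.le
    linarith
  have hXfin : (∫⁻ z, G z ^ (n:ℝ)) ^ (1/(n:ℝ)) ≠ ⊤ := by
    rw [hGn_eq]
    exact ENNReal.rpow_ne_top_of_nonneg (by positivity) ENNReal.ofReal_ne_top
  have hVfin : (volume (ball c r)) ^ (1 - 1/(n:ℝ)) ≠ ⊤ :=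
    ENNReal.rpow_ne_top_of_nonneg he0 hμBT
  have hRHSfin : ENNReal.ofReal (2*r) * 2^(n+1) * (∫⁻ z, G z ^ (n:ℝ)) ^ (1/(n:ℝ)) *
      (volume (ball c r)) ^ (1 - 1/(n:ℝ)) ≠ ⊤ :=
    ENNReal.mul_ne_top (ENNReal.mul_ne_top
      (ENNReal.mul_ne_top ENNReal.ofReal_ne_top (ENNReal.pow_ne_top ENNReal.ofNat_ne_top))
      hXfin) hVfin
  have habs : ∫ x in ball c r, |u x - ballAvg u c r|
      = (∫⁻ x in ball c r, ENNReal.ofReal |u x - ballAvg u c r|).toReal :=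
    integral_eq_lintegral_of_nonneg_ae (Filter.Eventually.of_forall fun x => abs_nonneg _)
      ((huc.sub continuous_const).abs.aestronglyMeasurable)
  have hRHStoReal : (ENNReal.ofReal (2*r) * 2^(n+1) * (∫⁻ z, G z ^ (n:ℝ)) ^ (1/(n:ℝ)) *
      (volume (ball c r)) ^ (1 - 1/(n:ℝ))).toReal
      = (2*r) * 2^(n+1) * (∫ z, ‖fderiv ℝ u z‖ ^ (n:ℝ)) ^ (1/(n:ℝ)) *
        (volume (ball c r)).toReal ^ (1 - 1/(n:ℝ)) := by
    rw [ENNReal.toReal_mul, ENNReal.toReal_mul, ENNReal.toReal_mul,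
      ENNReal.toReal_ofReal (by positivity), hGn_eq, ← ENNReal.toReal_rpow,
      ← ENNReal.toReal_rpow, ENNReal.toReal_ofReal hIN0, ENNReal.toReal_pow,
      ENNReal.toReal_ofNat]
  have hVReq : (volume (ball c r)).toReal = r^n * ωR := by
    rw [Measure.addHaar_ball_of_pos volume c hr, finrank_euclideanSpace_fin,
      ENNReal.toReal_mul, ENNReal.toReal_ofReal (by positivity), hωRdef]
  rw [meanOsc, habs]
  have step := ENNReal.toReal_mono hRHSfin main_chain
  calc (volume (Metric.ball c r)).toReal⁻¹ *
        (∫⁻ x in ball c r, ENNReal.ofReal |u x - ballAvg u c r|).toReal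
      ≤ (volume (ball c r)).toReal⁻¹ *
          ((2*r) * 2^(n+1) * (∫ z, ‖fderiv ℝ u z‖ ^ (n:ℝ)) ^ (1/(n:ℝ)) *
            (volume (ball c r)).toReal ^ (1 - 1/(n:ℝ))) := by
        rw [← hRHStoReal]
        exact mul_le_mul_of_nonneg_left step (inv_nonneg.2 ENNReal.toReal_nonneg)
    _ = (2^(n+2) * ωR ^ (-(1/(n:ℝ)))) * (∫ z, ‖fderiv ℝ u z‖ ^ (n:ℝ)) ^ (1/(n:ℝ)) := by
        rw [hVReq]
        have h1 : ((r:ℝ)^n * ωR) ^ (1 - 1/(n:ℝ))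
            = (r^n)^(1 - 1/(n:ℝ)) * ωR^(1 - 1/(n:ℝ)) :=
          Real.mul_rpow (by positivity) hω0.le
        have h2 : ((r:ℝ)^n) ^ (1 - 1/(n:ℝ)) = r^n / r := by
          rw [← Real.rpow_natCast r n, ← Real.rpow_mul hr.le,
            show ((n:ℝ) * (1 - 1/(n:ℝ))) = (n:ℝ) - 1 by field_simp,
            Real.rpow_sub hr, Real.rpow_natCast, Real.rpow_one]
        have h3 : ωR ^ (1 - 1/(n:ℝ)) = ωR ^ (-(1/(n:ℝ))) * ωR := by
          rw [show (1:ℝ) - 1/(n:ℝ) = -(1/(n:ℝ)) + 1 by ring, Real.rpow_add hω0,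
            Real.rpow_one]
        rw [h1, h2, h3]
        have hrn : (r:ℝ)^n ≠ 0 := by positivity
        field_simp
        ring
end

section
/- Let n ≥ 2. There is no constant C > 0 such that for every continuously differentiable function u : ℝⁿ → ℝ with compact support one has sup_{x ∈ ℝⁿ} |u(x)| ≤ C (∫_{ℝⁿ} |Du|^n dy)^{1/n}. Equivalently: for every C > 0 there exists a continuously differentiable compactly supported u : ℝⁿ → ℝ with sup_{x ∈ ℝⁿ} |u(x)| > C (∫_{ℝⁿ} |Du|^n dy)^{1/n}. -/
open MeasureTheory Real Set

namespace SobolevCE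

noncomputable section

/-- The closed annulus where the `k`-th bump's gradient lives. -/
def A (n k : ℕ) : Set (EuclideanSpace ℝ (Fin n)) :=
  {x | 1 ≤ (16:ℝ)^k * ‖x‖^2 ∧ (16:ℝ)^k * ‖x‖^2 ≤ 2}

/-- Majorant pieces. -/
def f (n k : ℕ) : EuclideanSpace ℝ (Fin n) → ℝ :=
  (A n k).indicator (fun x => (‖x‖^n)⁻¹)

/-- The test function: a stack of `N` annular bumps. -/
def uN (n N : ℕ) : EuclideanSpace ℝ (Fin n) → ℝ :=
  fun x => (N:ℝ) - ∑ k ∈ Finset.range N, Real.smoothTransition ((16:ℝ)^k * ‖x‖^2 - 1)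

/-- Candidate derivative of a single bump. -/
def D (n k : ℕ) (x : EuclideanSpace ℝ (Fin n)) : EuclideanSpace ℝ (Fin n) →L[ℝ] ℝ :=
  (deriv Real.smoothTransition ((16:ℝ)^k * ‖x‖^2 - 1) * ((16:ℝ)^k * 2)) • innerSL ℝ x

variable {n k N : ℕ}

lemma deriv_smoothTransition_of_neg {s : ℝ} (h : s < 0) :
    deriv Real.smoothTransition s = 0 := by
  have : Real.smoothTransition =ᶠ[nhds s] fun _ => (0:ℝ) := by
    filter_upwards [Iio_mem_nhds h] with t ht
    exact Real.smoothTransition.zero_of_nonpos ht.le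
  rw [this.deriv_eq, deriv_const]

lemma deriv_smoothTransition_of_one_lt {s : ℝ} (h : 1 < s) :
    deriv Real.smoothTransition s = 0 := by
  have : Real.smoothTransition =ᶠ[nhds s] fun _ => (1:ℝ) := by
    filter_upwards [Ioi_mem_nhds h] with t ht
    exact Real.smoothTransition.one_of_one_le ht.le
  rw [this.deriv_eq, deriv_const]

lemma exists_deriv_bound : ∃ M : ℝ, 1 ≤ M ∧ ∀ s : ℝ, |deriv Real.smoothTransition s| ≤ M := by
  have hc : Continuous (deriv Real.smoothTransition) :=
    (Real.smoothTransition.contDiff (n := 2)).continuous_deriv (by norm_num)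
  obtain ⟨M0, hM0⟩ := (isCompact_Icc (a := (0:ℝ)) (b := 1)).exists_bound_of_continuousOn
    hc.continuousOn
  refine ⟨max M0 1, le_max_right _ _, fun s => ?_⟩
  rcases lt_or_ge s 0 with h | h
  · simp [deriv_smoothTransition_of_neg h]
  rcases le_or_gt s 1 with h1 | h1
  · exact le_trans (hM0 s ⟨h, h1⟩) (le_max_left _ _)
  · simp [deriv_smoothTransition_of_one_lt h1]

lemma hasFDerivAt_uN (n N : ℕ) (x : EuclideanSpace ℝ (Fin n)) :
    HasFDerivAt (uN n N) (-∑ k ∈ Finset.range N, D n k x) x := by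
  have h : ∀ k : ℕ, HasFDerivAt (fun x : EuclideanSpace ℝ (Fin n) =>
      Real.smoothTransition ((16:ℝ)^k * ‖x‖^2 - 1)) (D n k x) x := by
    intro k
    have hq : HasFDerivAt (fun x : EuclideanSpace ℝ (Fin n) => (16:ℝ)^k * ‖x‖^2 - 1)
        (((16:ℝ)^k) • (2 • innerSL ℝ x)) x :=
      (((hasStrictFDerivAt_norm_sq x).hasFDerivAt).const_mul _).sub_const 1
    have hT : HasDerivAt Real.smoothTransition
        (deriv Real.smoothTransition ((16:ℝ)^k * ‖x‖^2 - 1)) ((16:ℝ)^k * ‖x‖^2 - 1) :=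
      ((Real.smoothTransition.contDiff (n := 1)).differentiable (by norm_num) _).hasDerivAt
    have h2 := hT.comp_hasFDerivAt x hq
    refine h2.congr_fderiv ?_
    unfold D
    ext y
    simp only [ContinuousLinearMap.smul_apply, ContinuousLinearMap.coe_smul',
      Pi.smul_apply, smul_eq_mul]
    ring
  exact (HasFDerivAt.fun_sum (fun k _ => h k)).const_sub _

lemma D_eq_zero {x : EuclideanSpace ℝ (Fin n)} (hx : x ∉ A n k) : D n k x = 0 := by
  unfold D
  have : deriv Real.smoothTransition ((16:ℝ)^k * ‖x‖^2 - 1) = 0 := by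
    rcases not_and_or.1 hx with h | h
    · exact deriv_smoothTransition_of_neg (by push_neg at h; linarith)
    · exact deriv_smoothTransition_of_one_lt (by push_neg at h; linarith)
  rw [this, zero_mul, zero_smul]

lemma A_disjoint {j : ℕ} (hjk : j < k) {x : EuclideanSpace ℝ (Fin n)}
    (hj : x ∈ A n j) (hk : x ∈ A n k) : False := by
  have h1 : (1:ℝ) ≤ (16:ℝ)^j * ‖x‖^2 := hj.1
  have h2 : (16:ℝ)^k * ‖x‖^2 ≤ 2 := hk.2
  have h3 : (16:ℝ)^j * 16 ≤ (16:ℝ)^k := by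
    calc (16:ℝ)^j * 16 = 16^(j+1) := by ring
    _ ≤ (16:ℝ)^k := pow_le_pow_right₀ (by norm_num) hjk
  have hs : (0:ℝ) ≤ ‖x‖^2 := sq_nonneg _
  nlinarith [mul_nonneg (sub_nonneg.2 h3) hs]

lemma f_nonneg (n k : ℕ) (x : EuclideanSpace ℝ (Fin n)) : 0 ≤ f n k x :=
  Set.indicator_nonneg (fun y _ => by positivity) x

lemma D_norm_pow_le {M : ℝ} (hM1 : 1 ≤ M)
    (hM : ∀ s : ℝ, |deriv Real.smoothTransition s| ≤ M)
    {x : EuclideanSpace ℝ (Fin n)} (hx : x ∈ A n k) :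
    ‖D n k x‖^n ≤ (4*M)^n * f n k x := by
  have hx1 : (1:ℝ) ≤ (16:ℝ)^k * ‖x‖^2 := hx.1
  have hx2 : (16:ℝ)^k * ‖x‖^2 ≤ 2 := hx.2
  have h16 : (0:ℝ) < 16^k := by positivity
  have h0 : 0 < ‖x‖ := by
    rcases eq_or_lt_of_le (norm_nonneg x) with h | h
    · exfalso; rw [← h] at hx1; simp at hx1; linarith
    · exact h
  have hDle : ‖D n k x‖ ≤ 4 * M / ‖x‖ := by
    have hD : ‖D n k x‖ = |deriv Real.smoothTransition ((16:ℝ)^k * ‖x‖^2 - 1) * ((16:ℝ)^k * 2)| * ‖x‖ := by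
      rw [D, norm_smul (deriv Real.smoothTransition ((16:ℝ)^k * ‖x‖^2 - 1) * ((16:ℝ)^k * 2))
        (innerSL ℝ x), innerSL_apply_norm, Real.norm_eq_abs]
    rw [hD, abs_mul]
    have hb : |((16:ℝ)^k * 2)| = (16:ℝ)^k * 2 := abs_of_pos (by positivity)
    rw [hb]
    have h16b : (16:ℝ)^k ≤ 2 / ‖x‖^2 := by
      rw [le_div_iff₀ (by positivity)]; linarith
    have hM0 : (0:ℝ) ≤ M := le_trans zero_le_one hM1
    calc |deriv Real.smoothTransition ((16:ℝ)^k * ‖x‖^2 - 1)| * ((16:ℝ)^k * 2) * ‖x‖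
        ≤ M * ((2 / ‖x‖^2) * 2) * ‖x‖ := by
          apply mul_le_mul_of_nonneg_right _ (norm_nonneg x)
          apply mul_le_mul (hM _) (by nlinarith) (by positivity) hM0
      _ = 4 * M / ‖x‖ := by field_simp; ring
  calc ‖D n k x‖^n ≤ (4 * M / ‖x‖)^n :=
        pow_le_pow_left₀ (norm_nonneg _) hDle n
    _ = (4*M)^n * (‖x‖^n)⁻¹ := by rw [div_pow, div_eq_mul_inv]
    _ = (4*M)^n * f n k x := by rw [f, Set.indicator_of_mem hx]

lemma fderiv_pow_le {M : ℝ} (hM1 : 1 ≤ M)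
    (hM : ∀ s : ℝ, |deriv Real.smoothTransition s| ≤ M) (hn : 1 ≤ n)
    (x : EuclideanSpace ℝ (Fin n)) :
    ‖fderiv ℝ (uN n N) x‖^n ≤ (4*M)^n * ∑ k ∈ Finset.range N, f n k x := by
  rw [(hasFDerivAt_uN n N x).fderiv, norm_neg]
  by_cases hx : ∃ k ∈ Finset.range N, x ∈ A n k
  · obtain ⟨k0, hk0m, hk0⟩ := hx
    have hsum : ∑ k ∈ Finset.range N, D n k x = D n k0 x := by
      apply Finset.sum_eq_single_of_mem k0 hk0m
      intro j hj hne
      apply D_eq_zero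
      intro hjA
      rcases Ne.lt_or_gt hne with h | h
      · exact A_disjoint h hjA hk0
      · exact A_disjoint h hk0 hjA
    rw [hsum]
    calc ‖D n k0 x‖^n ≤ (4*M)^n * f n k0 x := D_norm_pow_le hM1 hM hk0
      _ ≤ (4*M)^n * ∑ k ∈ Finset.range N, f n k x := by
          apply mul_le_mul_of_nonneg_left _ (by positivity)
          exact Finset.single_le_sum (fun k _ => f_nonneg n k x) hk0m
  · push_neg at hx
    have hz : ∑ k ∈ Finset.range N, D n k x = 0 :=
      Finset.sum_eq_zero fun k hk => D_eq_zero (hx k hk)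
    rw [hz, norm_zero, zero_pow (by omega)]
    have : (0:ℝ) ≤ ∑ k ∈ Finset.range N, f n k x :=
      Finset.sum_nonneg fun k _ => f_nonneg n k x
    positivity

lemma A_measurable (n k : ℕ) : MeasurableSet (A n k) := by
  have hA : A n k = (fun x : EuclideanSpace ℝ (Fin n) => (16:ℝ)^k * ‖x‖^2) ⁻¹' (Icc 1 2) := rfl
  rw [hA]
  exact (isClosed_Icc.preimage (continuous_const.mul (continuous_norm.pow 2))).measurableSet

lemma pow42 (k : ℕ) : ((4:ℝ)^k)^2 = (16:ℝ)^k := by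
  rw [← pow_mul, mul_comm k 2, pow_mul]; norm_num

lemma f_integrable (n k : ℕ) : Integrable (f n k) := by
  rw [f, integrable_indicator_iff (A_measurable n k)]
  apply Measure.integrableOn_of_bounded (M := (4:ℝ)^(k*n))
  · have hsub : A n k ⊆ Metric.closedBall 0 2 := by
      intro x hx
      have h16 : (1:ℝ) ≤ 16^k := one_le_pow₀ (by norm_num)
      have h1 : ‖x‖^2 ≤ 2 := by nlinarith [hx.2, sq_nonneg ‖x‖]
      have h2 : ‖x‖ ≤ 2 := by nlinarith [norm_nonneg x]
      simpa [Metric.mem_closedBall, dist_zero_right] using h2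
    exact (lt_of_le_of_lt (measure_mono hsub) measure_closedBall_lt_top).ne
  · exact ((measurable_norm.pow_const n).inv).aestronglyMeasurable
  · filter_upwards [ae_restrict_mem (A_measurable n k)] with a ha
    have h4 : (0:ℝ) < 4^k := by positivity
    have h1 : 1 ≤ (4:ℝ)^k * ‖a‖ := by
      nlinarith [ha.1, norm_nonneg a, pow42 k, mul_nonneg h4.le (norm_nonneg a)]
    have h1' : ((4:ℝ)^k)⁻¹ ≤ ‖a‖ := by
      rw [inv_eq_one_div, div_le_iff₀ h4]; linarith [mul_comm ((4:ℝ)^k) ‖a‖]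
    have h2 : ((4:ℝ)^(k*n))⁻¹ ≤ ‖a‖^n := by
      rw [pow_mul, ← inv_pow]
      exact pow_le_pow_left₀ (by positivity) h1' n
    rw [Real.norm_eq_abs, abs_of_nonneg (by positivity)]
    exact inv_le_of_inv_le₀ (by positivity) h2

lemma f_scale (n k : ℕ) (x : EuclideanSpace ℝ (Fin n)) :
    f n k x = ((4:ℝ)^k)^n * f n 0 (((4:ℝ)^k) • x) := by
  have hns : ‖((4:ℝ)^k) • x‖^2 = (16:ℝ)^k * ‖x‖^2 := by
    rw [norm_smul, mul_pow, Real.norm_eq_abs, sq_abs, pow42]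
  have hmem : (((4:ℝ)^k) • x ∈ A n 0) ↔ x ∈ A n k := by
    unfold A
    simp only [mem_setOf_eq, pow_zero, one_mul, hns]
  by_cases hx : x ∈ A n k
  · rw [f, f, Set.indicator_of_mem hx, Set.indicator_of_mem (hmem.2 hx)]
    have hn4 : ‖((4:ℝ)^k) • x‖^n = ((4:ℝ)^k)^n * ‖x‖^n := by
      rw [norm_smul, mul_pow, Real.norm_eq_abs, abs_of_pos (by positivity)]
    rw [hn4, mul_inv, ← mul_assoc, mul_inv_cancel₀ (by positivity), one_mul]
  · rw [f, f, Set.indicator_of_notMem hx,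
      Set.indicator_of_notMem (fun h => hx (hmem.1 h)), mul_zero]

lemma f_integral (n k : ℕ) : ∫ x, f n k x = ∫ x, f n 0 x := by
  simp_rw [f_scale n k]
  rw [integral_const_mul, Measure.integral_comp_smul volume (f n 0) ((4:ℝ)^k),
    finrank_euclideanSpace_fin, smul_eq_mul, abs_of_pos (by positivity), ← mul_assoc,
    mul_inv_cancel₀ (by positivity), one_mul]

lemma contDiff_uN (n N : ℕ) : ContDiff ℝ 1 (uN n N) := by
  unfold uN
  refine contDiff_const.sub (ContDiff.sum fun k _ => ?_)
  exact Real.smoothTransition.contDiff.comp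
    ((contDiff_const.mul (contDiff_norm_sq (𝕜 := ℝ))).sub contDiff_const)

lemma hasCompactSupport_uN (n N : ℕ) : HasCompactSupport (uN n N) := by
  apply HasCompactSupport.intro (isCompact_closedBall (0 : EuclideanSpace ℝ (Fin n)) 2)
  intro x hx
  have h2 : (2:ℝ) < ‖x‖ := by
    simp only [Metric.mem_closedBall, dist_zero_right, not_le] at hx
    exact hx
  have hterm : ∀ j : ℕ, Real.smoothTransition ((16:ℝ)^j * ‖x‖^2 - 1) = 1 := by
    intro j
    apply Real.smoothTransition.one_of_one_le
    have h16 : (1:ℝ) ≤ 16^j := one_le_pow₀ (by norm_num)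
    nlinarith
  simp [uN, hterm]

lemma uN_zero (n N : ℕ) : uN n N 0 = (N:ℝ) := by
  have : ∀ j : ℕ, Real.smoothTransition ((16:ℝ)^j * ‖(0:EuclideanSpace ℝ (Fin n))‖^2 - 1) = 0 := by
    intro j
    apply Real.smoothTransition.zero_of_nonpos
    simp
  simp [uN, this]

end

end SobolevCE

/-- **Failure of the critical Sobolev embedding `W^{1,n}(ℝⁿ) ↪ L^∞(ℝⁿ)`.**
There is no constant `C > 0` such that every `C¹` compactly supported `u : ℝⁿ → ℝ`
satisfies `sup_x |u(x)| ≤ C (∫_{ℝⁿ} |Du|^n)^{1/n}` (the sup bound being expressed as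
the pointwise bound `∀ x, |u x| ≤ …`). -/
theorem no_critical_sobolev_embedding_into_Linfty (n : ℕ) (hn : 2 ≤ n) :
    ¬ ∃ C : ℝ, 0 < C ∧
      ∀ u : EuclideanSpace ℝ (Fin n) → ℝ, ContDiff ℝ 1 u → HasCompactSupport u →
        ∀ x : EuclideanSpace ℝ (Fin n),
          |u x| ≤ C * (∫ y, ‖fderiv ℝ u y‖ ^ (n : ℝ)) ^ (1 / (n : ℝ)) := by
  rintro ⟨C, hC, h⟩
  obtain ⟨M, hM1, hM⟩ := SobolevCE.exists_deriv_bound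
  set c := ∫ x, SobolevCE.f n 0 x with hc
  have hc0 : 0 ≤ c := integral_nonneg (SobolevCE.f_nonneg n 0)
  set K := C^n * ((4*M)^n * c) with hK
  have hK0 : 0 ≤ K := by positivity
  set N := Nat.ceil K + 1 with hN
  have hN1 : 1 ≤ (N:ℝ) := by
    have : 1 ≤ N := Nat.succ_le_succ (Nat.zero_le _)
    exact_mod_cast this
  set u := SobolevCE.uN n N with hu
  set I := ∫ y, ‖fderiv ℝ u y‖ ^ (n:ℝ) with hI
  have hIeq : I = ∫ y, ‖fderiv ℝ u y‖ ^ (n:ℕ) := by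
    rw [hI]; congr 1; funext y; rw [Real.rpow_natCast]
  have hI0 : 0 ≤ I := by
    rw [hIeq]; exact integral_nonneg fun y => by positivity
  have key := h u (SobolevCE.contDiff_uN n N) (SobolevCE.hasCompactSupport_uN n N) 0
  rw [hu, SobolevCE.uN_zero n N, abs_of_nonneg (by positivity : (0:ℝ) ≤ (N:ℝ))] at key
  have hIle : I ≤ (4*M)^n * ((N:ℝ) * c) := by
    rw [hIeq]
    have hmaj : Integrable (fun x : EuclideanSpace ℝ (Fin n) =>
        (4*M)^n * ∑ k ∈ Finset.range N, SobolevCE.f n k x) :=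
      (integrable_finset_sum _ fun k _ => SobolevCE.f_integrable n k).const_mul _
    have hmono := integral_mono_of_nonneg
      (ae_of_all _ fun y => by positivity) hmaj
      (ae_of_all _ fun y => SobolevCE.fderiv_pow_le hM1 hM (by omega) y)
    refine hmono.trans (le_of_eq ?_)
    rw [integral_const_mul, integral_finset_sum _ fun k _ => SobolevCE.f_integrable n k]
    congr 1
    rw [Finset.sum_congr rfl fun k _ => SobolevCE.f_integral n k,
      Finset.sum_const, Finset.card_range, nsmul_eq_mul]
  have hpow : ((N:ℝ))^n ≤ C^n * I := by
    have hn0 : (n:ℝ) ≠ 0 := by positivity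
    calc (N:ℝ)^n ≤ (C * I^(1/(n:ℝ)))^n := pow_le_pow_left₀ (Nat.cast_nonneg N) key n
      _ = C^n * (I^(1/(n:ℝ)))^n := mul_pow _ _ _
      _ = C^n * I := by
          rw [← Real.rpow_natCast (I ^ (1/(n:ℝ))) n, ← Real.rpow_mul hI0, one_div,
            inv_mul_cancel₀ hn0, Real.rpow_one]
  have hfinal : ((N:ℝ))^n ≤ K * N := by
    refine hpow.trans ?_
    calc C^n * I ≤ C^n * ((4*M)^n * ((N:ℝ) * c)) :=
          mul_le_mul_of_nonneg_left hIle (by positivity)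
      _ = K * N := by rw [hK]; ring
  have hsq : (N:ℝ)^2 ≤ (N:ℝ)^n := pow_le_pow_right₀ hN1 hn
  have hNK : (N:ℝ) ≤ K := by
    have h' : (N:ℝ) * (N:ℝ) ≤ K * (N:ℝ) := by nlinarith
    exact le_of_mul_le_mul_right h' (by linarith)
  have hKN : K < (N:ℝ) := by
    have h1 := Nat.le_ceil K
    have h2 : ((Nat.ceil K : ℕ):ℝ) < (N:ℝ) := by
      rw [hN]; exact_mod_cast Nat.lt_succ_self _
    linarith
  linarith
end

section
/- Let n ≥ 2, let 1 ≤ p < n and 1 ≤ r < ∞, let θ ∈ [0,1], and define q by 1/q = θ(1/p − 1/n) + (1 − θ)/r, assuming q < ∞. Then there exists a constant C > 0, depending only on n, p, r and θ, such that for every continuously differentiable compactly supported u : ℝⁿ → ℝ, ‖u‖_{L^q(ℝⁿ)} ≤ C · ‖Du‖_{L^p(ℝⁿ)}^θ · ‖u‖_{L^r(ℝⁿ)}^{1−θ}, where ‖Du‖_{L^p} = (∫_{ℝⁿ} |Du|^p dx)^{1/p} and |Du| denotes the Euclidean/operator norm of the derivative of u. -/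
open MeasureTheory ENNReal NNReal

-- interpolation lemma
lemma interp_aux {α : Type*} [MeasurableSpace α] {μ : Measure α} {f : α → ℝ≥0∞}
    (hf : AEMeasurable f μ) {s r q θ : ℝ} (hs : 0 < s) (hr : 0 < r) (hq : 0 < q)
    (hθ : 0 < θ) (hθ1 : θ < 1) (h : 1/q = θ/s + (1-θ)/r) :
    (∫⁻ x, f x ^ q ∂μ) ^ (1/q) ≤
      ((∫⁻ x, f x ^ s ∂μ) ^ (1/s)) ^ θ * ((∫⁻ x, f x ^ r ∂μ) ^ (1/r)) ^ (1-θ) := by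
  have hθ1' : 0 < 1 - θ := by linarith
  set a : ℝ := s / (q * θ) with ha_def
  set b : ℝ := r / (q * (1 - θ)) with hb_def
  have ha_pos : 0 < a := by positivity
  have hb_pos : 0 < b := by positivity
  have hqθs : q * θ < s := by
    have h1 : θ / s < 1 / q := by
      rw [h]; have : 0 < (1 - θ)/r := by positivity
      linarith
    have := (div_lt_div_iff₀ hs hq).mp h1
    linarith [this]
  have hab : a.HolderConjugate b := by
    rw [Real.holderConjugate_iff]
    constructor
    · rw [ha_def, lt_div_iff₀ (by positivity)]
      linarith
    · rw [ha_def, hb_def]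
      field_simp
      have hq' : 1/q = θ/s + (1-θ)/r := h
      field_simp at hq'
      ring_nf
      ring_nf at hq'
      nlinarith [hq']
  have key : (∫⁻ x, f x ^ q ∂μ) ≤
      (∫⁻ x, f x ^ s ∂μ) ^ (1/a) * (∫⁻ x, f x ^ r ∂μ) ^ (1/b) := by
    have := ENNReal.lintegral_mul_le_Lp_mul_Lq μ hab
      (f := fun x => f x ^ (q * θ)) (g := fun x => f x ^ (q * (1-θ)))
      (hf.pow_const _) (hf.pow_const _)
    calc (∫⁻ x, f x ^ q ∂μ)
        = ∫⁻ x, (fun x => f x ^ (q * θ)) x * (fun x => f x ^ (q * (1-θ))) x ∂μ := by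
          congr 1; funext x
          rw [← ENNReal.rpow_add_of_nonneg _ _ (by positivity) (by positivity)]
          ring_nf
      _ ≤ (∫⁻ x, (f x ^ (q * θ)) ^ a ∂μ) ^ (1/a) * (∫⁻ x, (f x ^ (q * (1-θ))) ^ b ∂μ) ^ (1/b) :=
          this
      _ = (∫⁻ x, f x ^ s ∂μ) ^ (1/a) * (∫⁻ x, f x ^ r ∂μ) ^ (1/b) := by
          congr 1
          · congr 1; congr 1; funext x
            rw [← ENNReal.rpow_mul]
            congr 1
            rw [ha_def]; field_simp
          · congr 1; congr 1; funext x
            rw [← ENNReal.rpow_mul]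
            congr 1
            rw [hb_def]; field_simp
  calc (∫⁻ x, f x ^ q ∂μ) ^ (1/q)
      ≤ ((∫⁻ x, f x ^ s ∂μ) ^ (1/a) * (∫⁻ x, f x ^ r ∂μ) ^ (1/b)) ^ (1/q) :=
        ENNReal.rpow_le_rpow key (by positivity)
    _ = ((∫⁻ x, f x ^ s ∂μ) ^ (1/s)) ^ θ * ((∫⁻ x, f x ^ r ∂μ) ^ (1/r)) ^ (1-θ) := by
        rw [ENNReal.mul_rpow_of_nonneg _ _ (by positivity), ← ENNReal.rpow_mul,
          ← ENNReal.rpow_mul, ← ENNReal.rpow_mul, ← ENNReal.rpow_mul]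
        congr 1
        · congr 1
          rw [ha_def]; field_simp
        · congr 1
          rw [hb_def]; field_simp

lemma eq_gen_aux {α E' : Type*} [MeasurableSpace α] {μ : Measure α} [NormedAddCommGroup E']
    {f : α → E'} {e : ℝ} (he : 0 < e) (hmem : MemLp f (ENNReal.ofReal e) μ) :
    (eLpNorm f (ENNReal.ofReal e) μ).toReal = (∫ x, ‖f x‖ ^ e ∂μ) ^ (1/e) := by
  rw [hmem.eLpNorm_eq_integral_rpow_norm (ENNReal.ofReal_pos.mpr he).ne' ENNReal.ofReal_ne_top]
  rw [ENNReal.toReal_ofReal (Real.rpow_nonneg (integral_nonneg fun x => by positivity) _)]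
  rw [ENNReal.toReal_ofReal he.le, one_div]

/-- **Gagliardo–Nirenberg interpolation inequality.** Let `1 ≤ p < n`, `1 ≤ r < ∞`,
`θ ∈ [0,1]`, and let `q` satisfy `1/q = θ(1/p − 1/n) + (1−θ)/r` with `q < ∞`. Then
there is `C > 0`, depending only on `n, p, r, θ`, such that every `C¹` compactly
supported `u : ℝⁿ → ℝ` satisfies
`‖u‖_{L^q} ≤ C ‖Du‖_{L^p}^θ ‖u‖_{L^r}^{1−θ}`. -/
theorem gagliardo_nirenberg_interpolation (n : ℕ) (hn : 2 ≤ n)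
    (p r θ q : ℝ) (hp1 : 1 ≤ p) (hpn : p < n) (hr : 1 ≤ r)
    (hθ0 : 0 ≤ θ) (hθ1 : θ ≤ 1)
    (hq : 1 / q = θ * (1 / p - 1 / n) + (1 - θ) / r) (hqfin : 0 < q) :
    ∃ C : ℝ, 0 < C ∧
      ∀ u : EuclideanSpace ℝ (Fin n) → ℝ, ContDiff ℝ 1 u → HasCompactSupport u →
        (∫ x, |u x| ^ q) ^ (1 / q) ≤
          C * ((∫ x, ‖fderiv ℝ u x‖ ^ p) ^ (1 / p)) ^ θ *
            ((∫ x, |u x| ^ r) ^ (1 / r)) ^ (1 - θ) := by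
  have hn2 : (2:ℝ) ≤ n := by exact_mod_cast hn
  have hnpos : (0:ℝ) < n := by linarith
  have hp0 : (0:ℝ) < p := by linarith
  have hr0 : (0:ℝ) < r := by linarith
  have hdpos : 0 < 1/p - 1/(n:ℝ) := by
    have : 1/(n:ℝ) < 1/p := by
      apply one_div_lt_one_div_of_lt hp0 hpn
    linarith
  set s : ℝ := (1/p - 1/(n:ℝ))⁻¹ with hs_def
  have hs0 : 0 < s := by positivity
  have hs_inv : 1/s = 1/p - 1/(n:ℝ) := by rw [hs_def, one_div, inv_inv]
  -- NNReal exponents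
  set pN : ℝ≥0 := p.toNNReal with hpN_def
  set sN : ℝ≥0 := s.toNNReal with hsN_def
  have hpN_coe : (pN : ℝ) = p := Real.coe_toNNReal _ hp0.le
  have hsN_coe : (sN : ℝ) = s := Real.coe_toNNReal _ hs0.le
  have hpN1 : 1 ≤ pN := by
    rw [← NNReal.coe_le_coe, hpN_coe]; exact_mod_cast hp1
  have hrank : 0 < Module.finrank ℝ (EuclideanSpace ℝ (Fin n)) := by
    rw [finrank_euclideanSpace_fin]; omega
  have hp' : ((sN : ℝ))⁻¹ = (pN : ℝ)⁻¹ - ((Module.finrank ℝ (EuclideanSpace ℝ (Fin n))) : ℝ)⁻¹ := by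
    rw [finrank_euclideanSpace_fin, hpN_coe, hsN_coe]
    rw [← one_div s, hs_inv]; rw [one_div, one_div]
  set C₀ : ℝ≥0 := SNormLESNormFDerivOfEqConst (F := ℝ)
    (volume : Measure (EuclideanSpace ℝ (Fin n))) pN with hC₀_def
  have sob : ∀ u : EuclideanSpace ℝ (Fin n) → ℝ, ContDiff ℝ 1 u → HasCompactSupport u →
      eLpNorm u sN volume ≤ C₀ * eLpNorm (fderiv ℝ u) pN volume := by
    intro u hu h2u
    exact eLpNorm_le_eLpNorm_fderiv_of_eq volume hu h2u hpN1 hrank hp'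
  refine ⟨max (C₀:ℝ) 1, lt_of_lt_of_le one_pos (le_max_right _ _), ?_⟩
  set C : ℝ := max (C₀:ℝ) 1 with hC_def
  have hC1 : (1:ℝ) ≤ C := le_max_right _ _
  have hC0 : (0:ℝ) < C := by linarith
  intro u hu h2u
  have hu_cont : Continuous u := hu.continuous
  have hDu_cont : Continuous (fderiv ℝ u) := hu.continuous_fderiv one_ne_zero
  have h2Du : HasCompactSupport (fderiv ℝ u) := h2u.fderiv (𝕜 := ℝ)
  have memq : MemLp u (ENNReal.ofReal q) volume := hu_cont.memLp_of_hasCompactSupport h2u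
  have memr : MemLp u (ENNReal.ofReal r) volume := hu_cont.memLp_of_hasCompactSupport h2u
  have memDu : MemLp (fderiv ℝ u) (ENNReal.ofReal p) volume :=
    hDu_cont.memLp_of_hasCompactSupport h2Du
  -- real-integral descriptions of the Lp norms
  have eq_q : (eLpNorm u (ENNReal.ofReal q) volume).toReal = (∫ x, |u x| ^ q) ^ (1/q) := by
    rw [eq_gen_aux hqfin memq]; simp [Real.norm_eq_abs]
  have eq_r : (eLpNorm u (ENNReal.ofReal r) volume).toReal = (∫ x, |u x| ^ r) ^ (1/r) := by
    rw [eq_gen_aux hr0 memr]; simp [Real.norm_eq_abs]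
  have eq_p : (eLpNorm (fderiv ℝ u) (ENNReal.ofReal p) volume).toReal
      = (∫ x, ‖fderiv ℝ u x‖ ^ p) ^ (1/p) := eq_gen_aux hp0 memDu
  -- main ENNReal claim
  have claim : eLpNorm u (ENNReal.ofReal q) volume ≤
      ENNReal.ofReal C * (eLpNorm (fderiv ℝ u) (ENNReal.ofReal p) volume) ^ θ *
        (eLpNorm u (ENNReal.ofReal r) volume) ^ (1-θ) := by
    have hCge1 : (1:ℝ≥0∞) ≤ ENNReal.ofReal C := ENNReal.one_le_ofReal.mpr hC1
    have hC₀le : (C₀ : ℝ≥0∞) ≤ ENNReal.ofReal C := by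
      rw [← ENNReal.ofReal_coe_nnreal]
      exact ENNReal.ofReal_le_ofReal (le_max_left _ _)
    have hsE : ENNReal.ofReal s = (sN : ℝ≥0∞) := by
      rw [← hsN_coe, ENNReal.ofReal_coe_nnreal]
    have hpE : ENNReal.ofReal p = (pN : ℝ≥0∞) := by
      rw [← hpN_coe, ENNReal.ofReal_coe_nnreal]
    rcases eq_or_lt_of_le hθ0 with hθz | hθpos
    · -- θ = 0 : q = r
      have hqr : q = r := by
        have h1 : 1/q = 1/r := by rw [hq, ← hθz]; ring
        field_simp at h1; linarith
      rw [← hθz]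
      simp only [ENNReal.rpow_zero, sub_zero, ENNReal.rpow_one, mul_one, one_mul, hqr]
      calc eLpNorm u (ENNReal.ofReal r) volume
          = 1 * eLpNorm u (ENNReal.ofReal r) volume := (one_mul _).symm
        _ ≤ ENNReal.ofReal C * eLpNorm u (ENNReal.ofReal r) volume := by gcongr
    · rcases eq_or_lt_of_le hθ1 with hθo | hθlt
      · -- θ = 1 : q = s
        have hqs : q = s := by
          have h1 : 1/q = 1/s := by rw [hq, hθo, hs_inv]; ring
          field_simp at h1; linarith
        rw [hθo]
        simp only [ENNReal.rpow_one, sub_self, ENNReal.rpow_zero, mul_one]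
        rw [hqs, hsE, hpE]
        calc eLpNorm u (sN : ℝ≥0∞) volume
            ≤ (C₀:ℝ≥0∞) * eLpNorm (fderiv ℝ u) (pN:ℝ≥0∞) volume := sob u hu h2u
          _ ≤ ENNReal.ofReal C * eLpNorm (fderiv ℝ u) (pN:ℝ≥0∞) volume := by gcongr
      · -- 0 < θ < 1 : interpolation
        have hθ1' : 0 < 1 - θ := by linarith
        have hq' : 1/q = θ/s + (1-θ)/r := by
          rw [hq, ← hs_inv]; ring
        have hf : AEMeasurable (fun x => (‖u x‖₊ : ℝ≥0∞)) volume :=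
          (hu_cont.measurable.nnnorm.coe_nnreal_ennreal).aemeasurable
        have interp := interp_aux hf hs0 hr0 hqfin hθpos hθlt hq'
        have norm_eq : ∀ (e : ℝ), 0 < e → eLpNorm u (ENNReal.ofReal e) volume
            = (∫⁻ x, (‖u x‖₊:ℝ≥0∞) ^ e) ^ (1/e) := by
          intro e he
          rw [eLpNorm_eq_lintegral_rpow_enorm_toReal (ENNReal.ofReal_pos.mpr he).ne' ENNReal.ofReal_ne_top,
            ENNReal.toReal_ofReal he.le]
          rfl
        calc eLpNorm u (ENNReal.ofReal q) volume
            = (∫⁻ x, (‖u x‖₊:ℝ≥0∞) ^ q) ^ (1/q) := norm_eq q hqfin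
          _ ≤ ((∫⁻ x, (‖u x‖₊:ℝ≥0∞) ^ s) ^ (1/s)) ^ θ *
                ((∫⁻ x, (‖u x‖₊:ℝ≥0∞) ^ r) ^ (1/r)) ^ (1-θ) := interp
          _ = (eLpNorm u (ENNReal.ofReal s) volume) ^ θ *
                (eLpNorm u (ENNReal.ofReal r) volume) ^ (1-θ) := by
              rw [norm_eq s hs0, norm_eq r hr0]
          _ ≤ ((C₀:ℝ≥0∞) * eLpNorm (fderiv ℝ u) (pN:ℝ≥0∞) volume) ^ θ *
                (eLpNorm u (ENNReal.ofReal r) volume) ^ (1-θ) := by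
              rw [hsE]
              exact mul_le_mul_left (ENNReal.rpow_le_rpow (sob u hu h2u) hθ0) _
          _ = (C₀:ℝ≥0∞) ^ θ * (eLpNorm (fderiv ℝ u) (pN:ℝ≥0∞) volume) ^ θ *
                (eLpNorm u (ENNReal.ofReal r) volume) ^ (1-θ) := by
              rw [ENNReal.mul_rpow_of_nonneg _ _ hθ0]
          _ ≤ ENNReal.ofReal C * (eLpNorm (fderiv ℝ u) (ENNReal.ofReal p) volume) ^ θ *
                (eLpNorm u (ENNReal.ofReal r) volume) ^ (1-θ) := by
              rw [hpE]
              gcongr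
              calc (C₀:ℝ≥0∞) ^ θ ≤ (ENNReal.ofReal C) ^ θ :=
                    ENNReal.rpow_le_rpow hC₀le hθ0
                _ ≤ (ENNReal.ofReal C) ^ (1:ℝ) :=
                    ENNReal.rpow_le_rpow_of_exponent_le hCge1 hθ1
                _ = ENNReal.ofReal C := ENNReal.rpow_one _
  -- convert to real
  have hfin : ENNReal.ofReal C * (eLpNorm (fderiv ℝ u) (ENNReal.ofReal p) volume) ^ θ *
      (eLpNorm u (ENNReal.ofReal r) volume) ^ (1-θ) ≠ ⊤ := by
    apply ENNReal.mul_ne_top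
    apply ENNReal.mul_ne_top ENNReal.ofReal_ne_top
    · exact (ENNReal.rpow_lt_top_of_nonneg hθ0 memDu.2.ne).ne
    · exact (ENNReal.rpow_lt_top_of_nonneg (by linarith) memr.2.ne).ne
  have := ENNReal.toReal_mono hfin claim
  rw [eq_q] at this
  refine this.trans (le_of_eq ?_)
  rw [ENNReal.toReal_mul, ENNReal.toReal_mul, ENNReal.toReal_ofReal hC0.le,
    ← ENNReal.toReal_rpow, ← ENNReal.toReal_rpow, eq_r, eq_p]
end
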